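/- Let H be a connected graded Hopf algebra, A a commutative algebra, and R : A → A an idempotent Rota–Baxter operator (weight −1). For any character φ : H → A, define recursively φ⁻(x) = −R(φ(x) + ∑ φ⁻(x') φ(x'')) on elements of positive degree (where Δ̃(x) = ∑ x' ⊗ x'' is the reduced coproduct), φ⁻(1) = 1. Then φ⁻ is a character, i.e., φ⁻(xy) = φ⁻(x)φ⁻(y) for all x, y ∈ H. -/

import Mathlib

open TensorProduct

/-- The convolution product `f ⋆ g = m_A ∘ (f ⊗ g) ∘ Δ_H`. -/
noncomputable def convProd {K H A : Type*} [CommSemiring K] [Semiring H] [HopfAlgebra K H]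
    [Semiring A] [Algebra K A] (f g : H →ₗ[K] A) : H →ₗ[K] A :=
  (LinearMap.mul' K A) ∘ₗ (TensorProduct.map f g) ∘ₗ Coalgebra.comul

section Aux

variable {K : Type*} [Field K] {H : Type*} [Semiring H] [HopfAlgebra K H]

/-- The span of "reduced" homogeneous tensors of total degree `k` with both factors of
positive degree. -/
noncomputable def redSub (𝒜 : ℕ → Submodule K H) (k : ℕ) : Submodule K (H ⊗[K] H) :=
  Submodule.span K {t : H ⊗[K] H | ∃ p q a b, 0 < p ∧ 0 < q ∧ p + q = k ∧
    a ∈ 𝒜 p ∧ b ∈ 𝒜 q ∧ t = a ⊗ₜ[K] b}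

variable (𝒜 : ℕ → Submodule K H)

/-- Projection onto the `n`-th graded component, as a linear map. -/
noncomputable def projMap [DirectSum.Decomposition 𝒜] (n : ℕ) : H →ₗ[K] H where
  toFun h := (DirectSum.decompose 𝒜 h n : H)
  map_add' a b := by
    show (DirectSum.decompose 𝒜 (a + b) n : H) = _
    rw [DirectSum.decompose_add, DirectSum.add_apply, Submodule.coe_add]
  map_smul' c a := by
    show (DirectSum.decompose 𝒜 (c • a) n : H) = _
    rw [DirectSum.decompose_smul, DirectSum.smul_apply, Submodule.coe_smul, RingHom.id_apply]

@[simp] lemma projMap_apply [DirectSum.Decomposition 𝒜] (n : ℕ) (h : H) :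
    projMap 𝒜 n h = (DirectSum.decompose 𝒜 h n : H) := rfl

/-- `id ⊗ ε` followed by the canonical isomorphism. -/
noncomputable def gL : H ⊗[K] H →ₗ[K] H :=
  (TensorProduct.rid K H).toLinearMap ∘ₗ LinearMap.lTensor H (Coalgebra.counit (R := K))

/-- `ε ⊗ id` followed by the canonical isomorphism. -/
noncomputable def gR : H ⊗[K] H →ₗ[K] H :=
  (TensorProduct.lid K H).toLinearMap ∘ₗ LinearMap.rTensor H (Coalgebra.counit (R := K))

@[simp] lemma gL_tmul (a b : H) :
    gL (a ⊗ₜ[K] b) = Coalgebra.counit (R := K) b • a := by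
  simp [gL]

@[simp] lemma gR_tmul (a b : H) :
    gR (a ⊗ₜ[K] b) = Coalgebra.counit (R := K) a • b := by
  simp [gR]

lemma gL_comul (x : H) : gL (Coalgebra.comul (R := K) x) = x := by
  simp [gL]

lemma gR_comul (x : H) : gR (Coalgebra.comul (R := K) x) = x := by
  simp [gR]

lemma proj_red_zero [DirectSum.Decomposition 𝒜] {m n : ℕ} (g : H ⊗[K] H →ₗ[K] H)
    (hg : ∀ p q (a b : H), 0 < p → 0 < q → p + q = m → a ∈ 𝒜 p → b ∈ 𝒜 q →
      ∃ j, j ≠ n ∧ g (a ⊗ₜ[K] b) ∈ 𝒜 j)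
    {T : H ⊗[K] H} (hT : T ∈ redSub 𝒜 m) :
    (DirectSum.decompose 𝒜 (g T) n : H) = 0 := by
  refine Submodule.span_induction
    (p := fun t _ => (DirectSum.decompose 𝒜 (g t) n : H) = 0) ?_ ?_ ?_ ?_ hT
  · rintro t ⟨p, q, a, b, hp, hq, hpq, ha, hb, rfl⟩
    obtain ⟨j, hj, hmem⟩ := hg p q a b hp hq hpq ha hb
    exact DirectSum.decompose_of_mem_ne 𝒜 hmem hj
  · simp
  · intro s t _ _ hs ht
    rw [map_add, DirectSum.decompose_add, DirectSum.add_apply, Submodule.coe_add, hs, ht,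
      add_zero]
  · intro c t _ h
    rw [map_smul, DirectSum.decompose_smul, DirectSum.smul_apply, Submodule.coe_smul, h,
      smul_zero]

lemma comul_decomp (hinternal : DirectSum.IsInternal 𝒜)
    (hconn : 𝒜 0 = Submodule.span K {(1 : H)})
    (hΔ : ∀ n : ℕ, ∀ x ∈ 𝒜 n, Coalgebra.comul (R := K) x ∈
      ⨆ (p : ℕ × ℕ) (_ : p.1 + p.2 = n),
        LinearMap.range (TensorProduct.map (𝒜 p.1).subtype (𝒜 p.2).subtype))
    {m : ℕ} (hm : 0 < m) {x : H} (hx : x ∈ 𝒜 m) :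
    ∃ T ∈ redSub 𝒜 m,
      Coalgebra.comul (R := K) x = x ⊗ₜ[K] (1 : H) + (1 : H) ⊗ₜ[K] x + T := by
  classical
  letI := hinternal.chooseDecomposition
  have hone : (1 : H) ∈ 𝒜 0 := by rw [hconn]; exact Submodule.mem_span_singleton_self 1
  have hmem : Coalgebra.comul (R := K) x ∈
      (Submodule.map ((TensorProduct.mk K H H).flip (1 : H)) (𝒜 m) ⊔
        Submodule.map (TensorProduct.mk K H H (1 : H)) (𝒜 m)) ⊔ redSub 𝒜 m := by
    have hle : (⨆ (p : ℕ × ℕ) (_ : p.1 + p.2 = m),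
        LinearMap.range (TensorProduct.map (𝒜 p.1).subtype (𝒜 p.2).subtype)) ≤
        (Submodule.map ((TensorProduct.mk K H H).flip (1 : H)) (𝒜 m) ⊔
          Submodule.map (TensorProduct.mk K H H (1 : H)) (𝒜 m)) ⊔ redSub 𝒜 m := by
      refine iSup_le fun p => iSup_le fun hp => ?_
      rintro t ⟨s, rfl⟩
      induction s using TensorProduct.induction_on with
      | zero => simp
      | tmul a b =>
        obtain ⟨a, ha⟩ := a
        obtain ⟨b, hb⟩ := b
        rw [TensorProduct.map_tmul]
        simp only [Submodule.coe_subtype]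
        rcases Nat.eq_zero_or_pos p.1 with h1 | h1
        · rw [h1] at ha
          rw [hconn] at ha
          obtain ⟨c, rfl⟩ := Submodule.mem_span_singleton.mp ha
          have hb' : b ∈ 𝒜 m := by
            have : p.2 = m := by omega
            rwa [this] at hb
          refine Submodule.mem_sup_left (Submodule.mem_sup_right ⟨c • b, Submodule.smul_mem _ _ hb', ?_⟩)
          simp [TensorProduct.smul_tmul, TensorProduct.tmul_smul]
        · rcases Nat.eq_zero_or_pos p.2 with h2 | h2
          · rw [h2] at hb
            rw [hconn] at hb
            obtain ⟨c, rfl⟩ := Submodule.mem_span_singleton.mp hb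
            have ha' : a ∈ 𝒜 m := by
              have : p.1 = m := by omega
              rwa [this] at ha
            refine Submodule.mem_sup_left (Submodule.mem_sup_left ⟨c • a, Submodule.smul_mem _ _ ha', ?_⟩)
            simp [TensorProduct.smul_tmul, TensorProduct.tmul_smul]
          · exact Submodule.mem_sup_right (Submodule.subset_span
              ⟨p.1, p.2, a, b, h1, h2, hp, ha, hb, rfl⟩)
      | add s t hs ht =>
        rw [map_add]
        exact add_mem hs ht
    exact hle (hΔ m x hx)
  obtain ⟨u, hu, T, hT, heq⟩ := Submodule.mem_sup.mp hmem
  obtain ⟨u1, hu1, u2, hu2, rfl⟩ := Submodule.mem_sup.mp hu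
  obtain ⟨w, hw, rfl⟩ := hu1
  obtain ⟨v, hv, rfl⟩ := hu2
  simp only [LinearMap.flip_apply, TensorProduct.mk_apply] at heq
  -- heq : w ⊗ₜ 1 + 1 ⊗ₜ v + T = comul x
  have hLT : (DirectSum.decompose 𝒜 (gL (K := K) (H := H) T) m : H) = 0 := by
    refine proj_red_zero 𝒜 gL (fun p q a b hp hq hpq ha hb => ⟨p, by omega, ?_⟩) hT
    rw [gL_tmul]
    exact Submodule.smul_mem _ _ ha
  have hRT : (DirectSum.decompose 𝒜 (gR (K := K) (H := H) T) m : H) = 0 := by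
    refine proj_red_zero 𝒜 gR (fun p q a b hp hq hpq ha hb => ⟨q, by omega, ?_⟩) hT
    rw [gR_tmul]
    exact Submodule.smul_mem _ _ hb
  have ew : w = x := by
    have e1 := congrArg (gL (K := K) (H := H)) heq
    rw [map_add, map_add, gL_tmul, gL_tmul, gL_comul, Bialgebra.counit_one, one_smul] at e1
    -- e1 : w + ε v • 1 + gL T = x
    have e2 := congrArg (projMap 𝒜 m) e1
    rw [map_add, map_add, map_smul] at e2
    simp only [projMap_apply] at e2
    rw [DirectSum.decompose_of_mem_same 𝒜 hw, DirectSum.decompose_of_mem_ne 𝒜 hone hm.ne,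
      DirectSum.decompose_of_mem_same 𝒜 hx, hLT, smul_zero, add_zero, add_zero] at e2
    exact e2
  have ev : v = x := by
    have e1 := congrArg (gR (K := K) (H := H)) heq
    rw [map_add, map_add, gR_tmul, gR_tmul, gR_comul, Bialgebra.counit_one, one_smul] at e1
    -- e1 : ε w • 1 + v + gR T = x
    have e2 := congrArg (projMap 𝒜 m) e1
    rw [map_add, map_add, map_smul] at e2
    simp only [projMap_apply] at e2
    rw [DirectSum.decompose_of_mem_same 𝒜 hv, DirectSum.decompose_of_mem_ne 𝒜 hone hm.ne,
      DirectSum.decompose_of_mem_same 𝒜 hx, hRT, smul_zero, zero_add, add_zero] at e2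
    exact e2
  subst ew
  subst ev
  exact ⟨T, hT, heq.symm⟩

lemma counit_pos_zero (hinternal : DirectSum.IsInternal 𝒜)
    (hconn : 𝒜 0 = Submodule.span K {(1 : H)})
    (hΔ : ∀ n : ℕ, ∀ x ∈ 𝒜 n, Coalgebra.comul (R := K) x ∈
      ⨆ (p : ℕ × ℕ) (_ : p.1 + p.2 = n),
        LinearMap.range (TensorProduct.map (𝒜 p.1).subtype (𝒜 p.2).subtype))
    (hone_ne : (1 : H) ≠ 0)
    {m : ℕ} (hm : 0 < m) {x : H} (hx : x ∈ 𝒜 m) :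
    Coalgebra.counit (R := K) x = 0 := by
  classical
  letI := hinternal.chooseDecomposition
  have hone : (1 : H) ∈ 𝒜 0 := by rw [hconn]; exact Submodule.mem_span_singleton_self 1
  obtain ⟨T, hT, heq⟩ := comul_decomp 𝒜 hinternal hconn hΔ hm hx
  have happ := congrArg (gR (K := K) (H := H)) heq
  rw [gR_comul, map_add, map_add, gR_tmul, gR_tmul, Bialgebra.counit_one, one_smul] at happ
  -- happ : x = ε x • 1 + x + gR T
  have h0T : (DirectSum.decompose 𝒜 (gR (K := K) (H := H) T) 0 : H) = 0 := by
    refine proj_red_zero 𝒜 gR (fun p q a b hp hq hpq ha hb => ⟨q, by omega, ?_⟩) hT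
    rw [gR_tmul]
    exact Submodule.smul_mem _ _ hb
  have e2 := congrArg (projMap 𝒜 0) happ
  rw [map_add, map_add, map_smul] at e2
  simp only [projMap_apply] at e2
  rw [DirectSum.decompose_of_mem_ne 𝒜 hx hm.ne', DirectSum.decompose_of_mem_same 𝒜 hone,
    h0T, add_zero, add_zero] at e2
  -- e2 : 0 = ε x • 1
  by_contra hne
  refine hone_ne ?_
  calc (1 : H) = (Coalgebra.counit (R := K) x)⁻¹ • (Coalgebra.counit (R := K) x • (1 : H)) := by
        rw [smul_smul, inv_mul_cancel₀ hne, one_smul]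
    _ = 0 := by rw [← e2, smul_zero]

end Aux

/-- Let `H` be a connected graded Hopf algebra over a field `K` of
characteristic zero, `A` a commutative algebra and `R : A → A` an idempotent Rota–Baxter
operator of weight `-1`.  Let `φ : H → A` be a character and `φ⁻` the counterterm map given by
the Bogoliubov recursion `φ⁻(x) = -R(φ(x) + ∑ φ⁻(x')φ(x''))` on elements of positive degree
(equivalently, `φ⁻(x) = -R((φ⁻ ⋆ φ)(x) - φ⁻(x))` on the augmentation ideal) together with
`φ⁻(1) = 1`.  Then `φ⁻` is a character: `φ⁻(xy) = φ⁻(x) φ⁻(y)` for all `x, y ∈ H`. -/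
theorem counterterm_map_is_character
    (K : Type*) [Field K] [CharZero K]
    (H : Type*) [Semiring H] [HopfAlgebra K H]
    (𝒜 : ℕ → Submodule K H) (hinternal : DirectSum.IsInternal 𝒜)
    (hconn : 𝒜 0 = Submodule.span K {(1 : H)})
    (hΔ : ∀ n : ℕ, ∀ x ∈ 𝒜 n, Coalgebra.comul (R := K) x ∈
      ⨆ (p : ℕ × ℕ) (_ : p.1 + p.2 = n),
        LinearMap.range (TensorProduct.map (𝒜 p.1).subtype (𝒜 p.2).subtype))
    (A : Type*) [CommRing A] [Algebra K A]
    (R : A →ₗ[K] A)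
    (hRidem : ∀ a, R (R a) = R a)
    (hRB : ∀ a b, R (a * b) + R a * R b = R (R a * b) + R (a * R b))
    (φ : H →ₐ[K] A)
    (φm : H →ₗ[K] A) (hφm1 : φm 1 = 1)
    (hrec : ∀ x : H, Coalgebra.counit (R := K) x = 0 →
      φm x = - R ((convProd φm (φ : H →ₗ[K] A)) x - φm x)) :
    ∀ x y : H, φm (x * y) = φm x * φm y := by
  classical
  by_cases hH : (1 : H) = 0
  · haveI : Subsingleton H := subsingleton_of_zero_eq_one hH.symm
    intro x y
    have hz : ∀ z : H, z = 0 := fun z => Subsingleton.elim z 0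
    rw [hz (x * y), hz x, hz y, map_zero, zero_mul]
  set F : H ⊗[K] H →ₗ[K] A :=
    LinearMap.mul' K A ∘ₗ TensorProduct.map φm (φ : H →ₗ[K] A) with hFdef
  have hF : ∀ u v : H, F (u ⊗ₜ[K] v) = φm u * φ v := by
    intro u v
    simp [hFdef]
  have hconv : ∀ z : H, convProd φm (φ : H →ₗ[K] A) z = F (Coalgebra.comul (R := K) z) :=
    fun _ => rfl
  have key : ∀ N m k, m + k = N → ∀ x ∈ 𝒜 m, ∀ y ∈ 𝒜 k, φm (x * y) = φm x * φm y := by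
    intro N
    induction N using Nat.strong_induction_on with
    | _ N IH =>
      intro m k hmk x hx y hy
      have IH' : ∀ p q : ℕ, p + q < N → ∀ u ∈ 𝒜 p, ∀ v ∈ 𝒜 q, φm (u * v) = φm u * φm v :=
        fun p q h u hu v hv => IH (p + q) h p q rfl u hu v hv
      rcases Nat.eq_zero_or_pos m with hm | hm
      · subst hm
        rw [hconn] at hx
        obtain ⟨c, rfl⟩ := Submodule.mem_span_singleton.mp hx
        simp only [smul_mul_assoc, one_mul, map_smul, hφm1]
      rcases Nat.eq_zero_or_pos k with hk | hk
      · subst hk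
        rw [hconn] at hy
        obtain ⟨c, rfl⟩ := Submodule.mem_span_singleton.mp hy
        simp only [mul_smul_comm, mul_one, map_smul, hφm1]
      -- main case : both degrees positive
      obtain ⟨Tx, hTx, hDx⟩ := comul_decomp 𝒜 hinternal hconn hΔ hm hx
      obtain ⟨Ty, hTy, hDy⟩ := comul_decomp 𝒜 hinternal hconn hΔ hk hy
      have hεx : Coalgebra.counit (R := K) x = 0 :=
        counit_pos_zero 𝒜 hinternal hconn hΔ hH hm hx
      have hεy : Coalgebra.counit (R := K) y = 0 :=
        counit_pos_zero 𝒜 hinternal hconn hΔ hH hk hy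
      have hεxy : Coalgebra.counit (R := K) (x * y) = 0 := by
        rw [Bialgebra.counit_mul, hεx, zero_mul]
      -- the four mixed-product lemmas
      have lem1 : F ((x ⊗ₜ[K] (1 : H)) * Ty) = φm x * F Ty := by
        refine Submodule.span_induction
          (p := fun t _ => F ((x ⊗ₜ[K] (1 : H)) * t) = φm x * F t) ?_ ?_ ?_ ?_ hTy
        · rintro t ⟨p, q, c, d, hp, hq, hpq, hc, hd, rfl⟩
          rw [Algebra.TensorProduct.tmul_mul_tmul, one_mul, hF, hF,
            IH' m p (by omega) x hx c hc]
          ring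
        · simp
        · intro s t _ _ h1 h2
          rw [mul_add, map_add, h1, h2, map_add, mul_add]
        · intro c t _ h
          rw [mul_smul_comm, map_smul, h, map_smul, mul_smul_comm]
      have lem2 : F (((1 : H) ⊗ₜ[K] x) * Ty) = φ x * F Ty := by
        refine Submodule.span_induction
          (p := fun t _ => F (((1 : H) ⊗ₜ[K] x) * t) = φ x * F t) ?_ ?_ ?_ ?_ hTy
        · rintro t ⟨p, q, c, d, hp, hq, hpq, hc, hd, rfl⟩
          rw [Algebra.TensorProduct.tmul_mul_tmul, one_mul, hF, hF, map_mul]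
          ring
        · simp
        · intro s t _ _ h1 h2
          rw [mul_add, map_add, h1, h2, map_add, mul_add]
        · intro c t _ h
          rw [mul_smul_comm, map_smul, h, map_smul, mul_smul_comm]
      have lem3 : F (Tx * (y ⊗ₜ[K] (1 : H))) = φm y * F Tx := by
        refine Submodule.span_induction
          (p := fun t _ => F (t * (y ⊗ₜ[K] (1 : H))) = φm y * F t) ?_ ?_ ?_ ?_ hTx
        · rintro t ⟨p, q, a, b, hp, hq, hpq, ha, hb, rfl⟩
          rw [Algebra.TensorProduct.tmul_mul_tmul, mul_one, hF, hF,
            IH' p k (by omega) a ha y hy]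
          ring
        · simp
        · intro s t _ _ h1 h2
          rw [add_mul, map_add, h1, h2, map_add, mul_add]
        · intro c t _ h
          rw [smul_mul_assoc, map_smul, h, map_smul, mul_smul_comm]
      have lem4 : F (Tx * ((1 : H) ⊗ₜ[K] y)) = φ y * F Tx := by
        refine Submodule.span_induction
          (p := fun t _ => F (t * ((1 : H) ⊗ₜ[K] y)) = φ y * F t) ?_ ?_ ?_ ?_ hTx
        · rintro t ⟨p, q, a, b, hp, hq, hpq, ha, hb, rfl⟩
          rw [Algebra.TensorProduct.tmul_mul_tmul, mul_one, hF, hF, map_mul]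
          ring
        · simp
        · intro s t _ _ h1 h2
          rw [add_mul, map_add, h1, h2, map_add, mul_add]
        · intro c t _ h
          rw [smul_mul_assoc, map_smul, h, map_smul, mul_smul_comm]
      have lem5 : F (Tx * Ty) = F Tx * F Ty := by
        have main : ∀ s ∈ redSub 𝒜 m, ∀ t ∈ redSub 𝒜 k, F (s * t) = F s * F t := by
          intro s hs
          refine Submodule.span_induction
            (p := fun s _ => ∀ t ∈ redSub 𝒜 k, F (s * t) = F s * F t) ?_ ?_ ?_ ?_ hs
          · rintro s ⟨p, q, a, b, hp, hq, hpq, ha, hb, rfl⟩ t ht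
            refine Submodule.span_induction
              (p := fun t _ => F ((a ⊗ₜ[K] b) * t) = F (a ⊗ₜ[K] b) * F t) ?_ ?_ ?_ ?_ ht
            · rintro t ⟨p', q', c, d, hp', hq', hpq', hc, hd, rfl⟩
              rw [Algebra.TensorProduct.tmul_mul_tmul, hF, hF, hF,
                IH' p p' (by omega) a ha c hc, map_mul]
              ring
            · simp
            · intro u v _ _ h1 h2
              rw [mul_add, map_add, h1, h2, map_add, mul_add]
            · intro c u _ h
              rw [mul_smul_comm, map_smul, h, map_smul, mul_smul_comm]
          · intro t ht
            simp
          · intro u v _ _ h1 h2 t ht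
            rw [add_mul, map_add, h1 t ht, h2 t ht, map_add, add_mul]
          · intro c u _ h t ht
            rw [smul_mul_assoc, map_smul, h t ht, map_smul, smul_mul_assoc]
        exact main Tx hTx Ty hTy
      -- expansion of F (comul (x * y))
      have expand : F (Coalgebra.comul (R := K) (x * y)) =
          φm (x * y) +
            (φm x * φ y + φm y * φ x + φ x * φ y + φm x * F Ty + φ x * F Ty +
              φm y * F Tx + φ y * F Tx + F Tx * F Ty) := by
        rw [Bialgebra.comul_mul, hDx, hDy]
        simp only [add_mul, mul_add, map_add]
        rw [lem1, lem2, lem3, lem4, lem5]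
        simp only [Algebra.TensorProduct.tmul_mul_tmul, one_mul, mul_one]
        rw [hF, hF, hF, hF]
        simp only [map_one, map_mul, hφm1, one_mul, mul_one]
        ring
      -- Bogoliubov recursion values
      have hFcx : F (Coalgebra.comul (R := K) x) = φm x + (φ x + F Tx) := by
        rw [hDx, map_add, map_add, hF, hF]
        simp only [map_one, mul_one, hφm1, one_mul]
        ring
      have hFcy : F (Coalgebra.comul (R := K) y) = φm y + (φ y + F Ty) := by
        rw [hDy, map_add, map_add, hF, hF]
        simp only [map_one, mul_one, hφm1, one_mul]
        ring
      have hmx : φm x = - R (φ x + F Tx) := by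
        have h := hrec x hεx
        rw [hconv, hFcx, add_sub_cancel_left] at h
        exact h
      have hmy : φm y = - R (φ y + F Ty) := by
        have h := hrec y hεy
        rw [hconv, hFcy, add_sub_cancel_left] at h
        exact h
      have hmxy : φm (x * y) =
          - R ((φ x + F Tx) * (φ y + F Ty) + φm x * (φ y + F Ty) + φm y * (φ x + F Tx)) := by
        have h := hrec (x * y) hεxy
        rw [hconv, expand, add_sub_cancel_left] at h
        rw [h]
        congr 1
        congr 1
        ring
      set a := φ x + F Tx with ha
      set b := φ y + F Ty with hb
      rw [hmxy, hmx, hmy]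
      have h1 : a * b + -R a * b + -R b * a = a * b - R a * b - a * R b := by ring
      rw [h1, map_sub, map_sub]
      linear_combination -(hRB a b)
  -- reduce the general statement to homogeneous elements
  intro x y
  have hx : x ∈ ⨆ n, 𝒜 n := by
    rw [hinternal.submodule_iSup_eq_top]
    trivial
  have hy : y ∈ ⨆ n, 𝒜 n := by
    rw [hinternal.submodule_iSup_eq_top]
    trivial
  refine Submodule.iSup_induction 𝒜
    (motive := fun u => ∀ v, v ∈ (⨆ n, 𝒜 n) → φm (u * v) = φm u * φm v) hx ?_ ?_ ?_ y hy
  · intro i u hu v hv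
    refine Submodule.iSup_induction 𝒜
      (motive := fun v => φm (u * v) = φm u * φm v) hv ?_ ?_ ?_
    · intro j v hvj
      exact key (i + j) i j rfl u hu v hvj
    · simp
    · intro v w h1 h2
      rw [mul_add, map_add, h1, h2, map_add, mul_add]
  · intro v hv
    simp
  · intro u1 u2 h1 h2 v hv
    rw [add_mul, map_add, h1 v hv, h2 v hv, map_add, add_mul]
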